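/- Let ϰ be an integer with ϰ ≥ 3, set q = e^{iπ/ϰ}, and let n be a natural number with n < ϰ. Define linear endomorphisms K, E, F of ℂ^{n+1} (with standard basis v₀, …, v_n) by K v_i = q^{n−2i} v_i, E v_i = [n−i+1] v_{i−1} (with E v₀ = 0), and F v_i = [i+1] v_{i+1} (with F v_n = 0), where [m] = (q^m − q^{−m})/(q − q^{−1}). Then the only ℂ-subspaces W ⊆ ℂ^{n+1} satisfying K(W) ⊆ W, E(W) ⊆ W and F(W) ⊆ W are W = 0 and W = ℂ^{n+1}. -/

import Mathlib

open Real

/-- The quantum integer `[m] = (q^m - q^{-m}) / (q - q⁻¹)`. -/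
noncomputable def qint (q : ℂ) (m : ℤ) : ℂ := (q ^ m - q ^ (-m)) / (q - q⁻¹)

/-- The standard basis vector `v_i` of `ℂ^{n+1}`. -/
noncomputable def stdVec (n : ℕ) (i : Fin (n + 1)) : Fin (n + 1) → ℂ := Pi.single i 1

lemma qCastEq (ϰ : ℕ) (hϰ : 3 ≤ ϰ) (k j : ℤ)
    (hj : (k:ℂ) * (Real.pi * Complex.I / ϰ) = (-k:ℤ) * (Real.pi * Complex.I / ϰ) + j * (2 * Real.pi * Complex.I)) :
    (k : ℂ) = j * ϰ := by
  have hϰ0 : (ϰ : ℂ) ≠ 0 := Nat.cast_ne_zero.mpr (by omega)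
  have hπ : (Real.pi : ℂ) ≠ 0 := by exact_mod_cast Real.pi_ne_zero
  have hI : (Complex.I : ℂ) ≠ 0 := Complex.I_ne_zero
  field_simp at hj
  have h2 : (2:ℂ) * ((k:ℂ) - j*ϰ) * (Real.pi * Complex.I) = 0 := by push_cast at hj; linear_combination ((Real.pi : ℂ) * Complex.I) * hj
  rcases mul_eq_zero.mp h2 with h | h
  · rcases mul_eq_zero.mp h with h' | h'
    · norm_num at h'
    · linear_combination h'
  · exact absurd h (mul_ne_zero hπ hI)

lemma sub_ne (ϰ : ℕ) (hϰ : 3 ≤ ϰ) (q : ℂ)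
    (hq : q = Complex.exp (Real.pi * Complex.I / ϰ)) (k : ℤ) (h1 : 1 ≤ k) (h2 : k < ϰ) :
    q ^ k - q ^ (-k) ≠ 0 := by
  have hpow : ∀ j : ℤ, q ^ j = Complex.exp (j * (Real.pi * Complex.I / ϰ)) := by
    intro j; rw [hq, ← Complex.exp_int_mul]
  intro h
  have heq : q ^ k = q ^ (-k) := by linear_combination h
  rw [hpow, hpow, Complex.exp_eq_exp_iff_exists_int] at heq
  obtain ⟨j, hj⟩ := heq
  have hkj : (k : ℂ) = j * ϰ := qCastEq ϰ hϰ k j (by push_cast at hj ⊢; linear_combination hj)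
  have hkj' : k = j * ϰ := by exact_mod_cast hkj
  have hj1 : 1 ≤ j := by nlinarith [hkj', h1]
  nlinarith

lemma qint_ne (ϰ : ℕ) (hϰ : 3 ≤ ϰ) (q : ℂ)
    (hq : q = Complex.exp (Real.pi * Complex.I / ϰ)) (m : ℤ) (h1 : 1 ≤ m) (h2 : m < ϰ) :
    qint q m ≠ 0 := by
  have hnum := sub_ne ϰ hϰ q hq m h1 h2
  have hden : q - q⁻¹ ≠ 0 := by
    have := sub_ne ϰ hϰ q hq 1 le_rfl (by exact_mod_cast hϰ.trans_lt' (by norm_num))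
    simpa using this
  exact div_ne_zero hnum hden

lemma eq_sum_std (n : ℕ) (x : Fin (n + 1) → ℂ) : x = ∑ i, x i • stdVec n i := by
  funext j
  rw [Finset.sum_apply]
  simp [stdVec, Pi.single_apply]

lemma E_apply {n : ℕ} (q : ℂ) (E : (Fin (n+1) → ℂ) →ₗ[ℂ] (Fin (n+1) → ℂ))
    (hE0 : E (stdVec n 0) = 0)
    (hE : ∀ i : Fin n, E (stdVec n i.succ) =
      qint q ((n : ℤ) - ((i.succ : Fin (n + 1)) : ℕ) + 1) • stdVec n i.castSucc)
    (x : Fin (n+1) → ℂ) (k : Fin (n+1)) :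
    E x k = if h : (k : ℕ) < n then
      qint q ((n : ℤ) - (k : ℕ)) * x ⟨(k : ℕ) + 1, Nat.succ_lt_succ h⟩ else 0 := by
  conv_lhs => rw [eq_sum_std n x, map_sum]
  simp_rw [map_smul]
  rw [Fin.sum_univ_succ, hE0, smul_zero, zero_add]
  simp_rw [hE]
  rw [Finset.sum_apply]
  by_cases h : (k : ℕ) < n
  · rw [dif_pos h, Finset.sum_eq_single (⟨(k:ℕ), h⟩ : Fin n)]
    · simp only [Pi.smul_apply, smul_eq_mul, stdVec, Pi.single_apply]
      rw [if_pos (by apply Fin.ext; simp)]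
      have h2 : (Fin.succ ⟨(k:ℕ), h⟩ : Fin (n+1)) = ⟨(k:ℕ)+1, Nat.succ_lt_succ h⟩ := rfl
      rw [h2]
      simp only [Fin.val_mk]
      have h3 : ((n : ℤ) - ((k:ℕ) + 1 : ℕ) + 1) = (n : ℤ) - (k:ℕ) := by push_cast; ring
      rw [h3]
      ring
    · intro i _ hi
      have hcond : ¬(k = i.castSucc) := by
        intro hk
        apply hi
        apply Fin.ext
        have := congrArg (Fin.val) hk
        simpa using this.symm
      simp only [Pi.smul_apply, smul_eq_mul, stdVec, Pi.single_apply]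
      rw [if_neg hcond]; ring
    · intro habs; exact absurd (Finset.mem_univ _) habs
  · rw [dif_neg h]
    apply Finset.sum_eq_zero
    intro i _
    have hcond : ¬(k = i.castSucc) := by
      intro hk
      apply h
      have := congrArg (Fin.val) hk
      simp at this
      omega
    simp only [Pi.smul_apply, smul_eq_mul, stdVec, Pi.single_apply]
    rw [if_neg hcond]; ring

/-- For `q = e^{iπ/ϰ}` with `ϰ ≥ 3` and `n < ϰ`, the Weyl module `V_n` of `U_q(sl₂)`,
given by `K v_i = q^{n-2i} v_i`, `E v_i = [n-i+1] v_{i-1}` (with `E v₀ = 0`) and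
`F v_i = [i+1] v_{i+1}` (with `F v_n = 0`), is irreducible: its only invariant
subspaces are `0` and `ℂ^{n+1}`. -/
theorem weyl_module_irreducible (ϰ : ℕ) (hϰ : 3 ≤ ϰ) (q : ℂ)
    (hq : q = Complex.exp (Real.pi * Complex.I / ϰ)) (n : ℕ) (hn : n < ϰ)
    (K E F : (Fin (n + 1) → ℂ) →ₗ[ℂ] (Fin (n + 1) → ℂ))
    (hK : ∀ i : Fin (n + 1), K (stdVec n i) = q ^ ((n : ℤ) - 2 * (i : ℕ)) • stdVec n i)
    (hE0 : E (stdVec n 0) = 0)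
    (hE : ∀ i : Fin n, E (stdVec n i.succ) =
      qint q ((n : ℤ) - ((i.succ : Fin (n + 1)) : ℕ) + 1) • stdVec n i.castSucc)
    (hFn : F (stdVec n (Fin.last n)) = 0)
    (hF : ∀ i : Fin n, F (stdVec n i.castSucc) =
      qint q (((i : ℕ) : ℤ) + 1) • stdVec n i.succ)
    (W : Submodule ℂ (Fin (n + 1) → ℂ))
    (hKW : ∀ x ∈ W, K x ∈ W) (hEW : ∀ x ∈ W, E x ∈ W) (hFW : ∀ x ∈ W, F x ∈ W) :
    W = ⊥ ∨ W = ⊤ := by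
  have hq1 : ∀ m : ℤ, 1 ≤ m → m < ϰ → qint q m ≠ 0 := fun m h1 h2 => qint_ne ϰ hϰ q hq m h1 h2
  by_cases hW : W = ⊥
  · exact Or.inl hW
  right
  obtain ⟨x₀, hx₀W, hx₀⟩ := Submodule.exists_mem_ne_zero_of_ne_bot hW
  -- first: the highest weight vector is in W
  have hQ : ∀ m : ℕ, ∀ x, x ∈ W → x ≠ 0 →
      (∀ k : Fin (n+1), m < (k:ℕ) → x k = 0) → stdVec n 0 ∈ W := by
    intro m
    induction m with
    | zero =>
      intro x hxW hx0 hsupp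
      have hx00 : x 0 ≠ 0 := by
        intro h0
        apply hx0
        funext k
        by_cases hk : (k:ℕ) = 0
        · have hk' : k = 0 := Fin.ext hk
          rw [hk']; exact h0
        · exact hsupp k (Nat.pos_of_ne_zero hk)
      have hrep : stdVec n 0 = (x 0)⁻¹ • x := by
        funext k
        simp only [Pi.smul_apply, smul_eq_mul, stdVec, Pi.single_apply]
        by_cases hk : k = 0
        · rw [if_pos hk, hk]
          field_simp
        · rw [if_neg hk, hsupp k (Nat.pos_of_ne_zero (fun h => hk (Fin.ext h))), mul_zero]
      rw [hrep]
      exact W.smul_mem _ hxW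
    | succ m ih =>
      intro x hxW hx0 hsupp
      by_cases hmn : n ≤ m
      · exact ih x hxW hx0 (fun k hk => absurd k.isLt (by omega))
      · by_cases hxm : x ⟨m+1, by omega⟩ = 0
        · apply ih x hxW hx0
          intro k hk
          by_cases hk' : (k:ℕ) = m+1
          · have : k = ⟨m+1, by omega⟩ := Fin.ext hk'
            rw [this]; exact hxm
          · exact hsupp k (by omega)
        · have hmn' : m < n := by omega
          have hyW := hEW x hxW
          have hym : E x ⟨m, by omega⟩ ≠ 0 := by
            rw [E_apply q E hE0 hE, dif_pos (show ((⟨m, by omega⟩ : Fin (n+1)) : ℕ) < n from hmn')]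
            exact mul_ne_zero (hq1 ((n:ℤ) - m) (by omega) (by omega)) hxm
          have hysupp : ∀ k : Fin (n+1), m < (k:ℕ) → E x k = 0 := by
            intro k hk
            rw [E_apply q E hE0 hE]
            split_ifs with h
            · rw [hsupp ⟨(k:ℕ)+1, Nat.succ_lt_succ h⟩ (by simp; omega), mul_zero]
            · rfl
          exact ih (E x) hyW (fun h => hym (by rw [h]; rfl)) hysupp
  have h0W : stdVec n 0 ∈ W := hQ n x₀ hx₀W hx₀ (fun k hk => absurd k.isLt (by omega))
  -- all basis vectors are in W
  have hall : ∀ i : ℕ, ∀ h : i < n + 1, stdVec n ⟨i, h⟩ ∈ W := by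
    intro i
    induction i with
    | zero => intro h; exact h0W
    | succ i ih =>
      intro h
      have hi : i < n := by omega
      have hiW : stdVec n ((⟨i, hi⟩ : Fin n).castSucc) ∈ W := ih (by omega)
      have hmem := hFW _ hiW
      rw [hF ⟨i, hi⟩] at hmem
      have hne : qint q ((i:ℤ)+1) ≠ 0 := hq1 ((i:ℤ)+1) (by omega) (by push_cast; omega)
      have : stdVec n ((⟨i, hi⟩ : Fin n).succ) =
          (qint q ((i:ℤ)+1))⁻¹ • (qint q (((i:ℕ):ℤ)+1) • stdVec n ((⟨i, hi⟩ : Fin n).succ)) := by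
        rw [smul_smul, inv_mul_cancel₀ hne, one_smul]
      have hsW : stdVec n ((⟨i, hi⟩ : Fin n).succ) ∈ W := by
        rw [this]; exact W.smul_mem _ hmem
      exact hsW
  rw [eq_top_iff]
  intro x _
  rw [eq_sum_std n x]
  exact Submodule.sum_mem _ (fun i _ => W.smul_mem _ (hall (i:ℕ) i.isLt))
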